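/- Let p be prime, n a positive integer, and α a primitive element of GF(p^n). Then the n × n matrix with (i,j)-entry α^{i+j} (0 ≤ i, j ≤ n−1), viewed over the additive group of GF(p^n) ≅ Z_p^n, is a (Z_p^n, n, 0) contracted difference matrix. -/

import Mathlib

def IsAddDiffMatrix {G : Type*} [AddGroup G] {I J : Type*} (A : I → J → G) (lam : ℕ) : Prop :=
  Nat.card J = lam * Nat.card G ∧
  ∀ i ℓ : I, i ≠ ℓ → ∀ g : G, Nat.card {j : J // A i j - A ℓ j = g} = lam

/-- The `p`-expansion of a `k × l` matrix over an abelian group: the `p^k × p^l` matrix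
whose `(r, c)` entry is `r M cᵀ`. -/
def pExpand (p : ℕ) {G : Type*} [AddCommGroup G] {k l : ℕ} (M : Fin k → Fin l → G) :
    (Fin k → ZMod p) → (Fin l → ZMod p) → G :=
  fun r c => ∑ i, ∑ j, ((r i).val * (c j).val) • M i j

/-- A `k × l` matrix `M` over an abelian `p`-group `G` (of order `p^n`, with `l = n + s`)
is a `(G, k, s)` contracted difference matrix if its `p`-expansion is a `(G, p^k, p^s)`
difference matrix. -/
def IsCDM (p : ℕ) {G : Type*} [AddCommGroup G] {k l : ℕ} (M : Fin k → Fin l → G)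
    (s : ℕ) : Prop :=
  IsAddDiffMatrix (pExpand p M) (p ^ s)

/-- For a primitive element `α` of `GF(p^n)`, the `n × n` matrix with `(i,j)` entry
`α^(i+j)`, viewed over the additive group of `GF(p^n)`, is a `(Z_p^n, n, 0)` contracted
difference matrix. -/
theorem stmt_13 (p n : ℕ) [Fact p.Prime] (hn : 0 < n) (α : GaloisField p n)
    (hα : ∀ x : GaloisField p n, x ≠ 0 → ∃ m : ℕ, α ^ m = x) :
    IsCDM p (fun i j : Fin n => α ^ ((i : ℕ) + (j : ℕ))) 0 := by
  classical
  have hn' : n ≠ 0 := hn.ne'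
  have hint : IsIntegral (ZMod p) α := IsIntegral.of_finite _ _
  have htop : IntermediateField.adjoin (ZMod p) {α} = ⊤ := by
    rw [eq_top_iff]
    rintro x -
    rcases eq_or_ne x 0 with rfl | hx
    · exact zero_mem _
    · obtain ⟨m, rfl⟩ := hα x hx
      exact pow_mem (IntermediateField.mem_adjoin_simple_self _ α) m
  have hdeg : (minpoly (ZMod p) α).natDegree = n := by
    have h1 := IntermediateField.adjoin.finrank hint
    rw [htop, IntermediateField.finrank_top', GaloisField.finrank p hn'] at h1
    exact h1.symm
  have hLI : LinearIndependent (ZMod p) fun i : Fin n => α ^ (i : ℕ) := by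
    have h2 := linearIndependent_pow (K := ZMod p) α
    rwa [hdeg] at h2
  set f : (Fin n → ZMod p) → GaloisField p n :=
    fun r => ∑ i, ((r i).val : ℕ) • α ^ (i : ℕ) with hf
  set F : (Fin n → ZMod p) →ₗ[ZMod p] GaloisField p n :=
    Fintype.linearCombination (ZMod p) (fun i : Fin n => α ^ (i : ℕ)) with hF
  have hFf : ∀ r, F r = f r := by
    intro r
    rw [hF, Fintype.linearCombination_apply, hf]
    refine Finset.sum_congr rfl fun i _ => ?_
    rw [← Nat.cast_smul_eq_nsmul (ZMod p) (r i).val (α ^ (i : ℕ)),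
      ZMod.natCast_val, ZMod.cast_id]
  have hker : ∀ x, F x = 0 → x = 0 := by
    intro x hx
    funext i
    rw [hF, Fintype.linearCombination_apply] at hx
    exact Fintype.linearIndependent_iff.mp hLI x hx i
  have hinj : Function.Injective F := by
    intro x y h
    have h0 := hker (x - y) (by rw [map_sub, h, sub_self])
    exact sub_eq_zero.mp h0
  have hcard : Nat.card (Fin n → ZMod p) = Nat.card (GaloisField p n) := by
    rw [GaloisField.card p n hn', Nat.card_pi]
    simp [Nat.card_zmod]
  have hbij : Function.Bijective F :=
    (Nat.bijective_iff_injective_and_card F).mpr ⟨hinj, hcard⟩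
  set e : (Fin n → ZMod p) ≃ GaloisField p n := Equiv.ofBijective F hbij with he
  have hkey : ∀ r c, pExpand p (fun i j : Fin n => α ^ ((i : ℕ) + (j : ℕ))) r c
      = f r * f c := by
    intro r c
    rw [hf]
    show (∑ i, ∑ j, ((r i).val * (c j).val) • α ^ ((i : ℕ) + (j : ℕ))) = _
    rw [Finset.sum_mul_sum]
    refine Finset.sum_congr rfl fun i _ => Finset.sum_congr rfl fun j _ => ?_
    rw [pow_add, mul_smul, mul_smul_comm, smul_mul_assoc]; exact smul_comm _ _ _
  refine ⟨?_, ?_⟩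
  · rw [pow_zero, one_mul]; exact hcard
  · intro r ℓ hne g
    have hd : f r - f ℓ ≠ 0 := by
      intro h
      exact hne (hinj (by rw [hFf, hFf, sub_eq_zero.mp h]))
    set d := f r - f ℓ with hdd
    have hiff : ∀ c, (pExpand p (fun i j : Fin n => α ^ ((i : ℕ) + (j : ℕ))) r c
        - pExpand p (fun i j : Fin n => α ^ ((i : ℕ) + (j : ℕ))) ℓ c = g)
        ↔ c = e.symm (d⁻¹ * g) := by
      intro c
      rw [hkey, hkey, ← sub_mul, ← hdd, Equiv.eq_symm_apply]
      have hec : e c = f c := hFf c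
      rw [hec]
      constructor
      · intro h
        rw [← h, inv_mul_cancel_left₀ hd]
      · intro h
        rw [h, mul_inv_cancel_left₀ hd]
    rw [pow_zero, Nat.card_eq_one_iff_unique]
    constructor
    · exact ⟨fun a b => Subtype.ext (by rw [(hiff a).mp a.2, (hiff b).mp b.2])⟩
    · exact ⟨⟨e.symm (d⁻¹ * g), (hiff _).mpr rfl⟩⟩
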